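/- arXiv:2110.05821 — 2 statements merged into one kernel-verified Lean document; each statement's English description precedes it below -/
import Mathlib

section
/- Let X = X_1 + ... + X_K where the X_k are independent exponential random variables with rates a_k > 0, and let a_* = min_k a_k. Then for every δ > 0, P(X ≥ (1+δ)·E[X]) ≤ (1/(1+δ))·exp(−a_*·E[X]·(δ − log(1+δ))). -/
open ProbabilityTheory MeasureTheory Finset Set Real

lemma my_map_eq_expMeasure {Ω : Type*} [MeasurableSpace Ω] (P : Measure Ω)
    [IsProbabilityMeasure P] {r : ℝ} (hr : 0 < r) {f : Ω → ℝ} (hf : Measurable f)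
    (h : ∀ t : ℝ, 0 ≤ t → P {ω | f ω ≤ t} = ENNReal.ofReal (1 - Real.exp (-r * t))) :
    P.map f = expMeasure r := by
  have hp := isProbabilityMeasure_expMeasure hr
  refine MeasureTheory.Measure.ext_of_Iic (P.map f) (expMeasure r) fun t => ?_
  rw [Measure.map_apply hf measurableSet_Iic]
  have hIic : f ⁻¹' Iic t = {ω | f ω ≤ t} := rfl
  have hexpm : expMeasure r (Set.Iic t)
      = ENNReal.ofReal (if 0 ≤ t then 1 - Real.exp (-(r*t)) else 0) := by
    rw [expMeasure, gammaMeasure, withDensity_apply _ measurableSet_Iic]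
    exact lintegral_exponentialPDF_eq_antiDeriv hr t
  rw [hIic, hexpm]
  by_cases ht : 0 ≤ t
  · rw [if_pos ht, h t ht, neg_mul]
  · rw [if_neg ht]
    have h0 : P {ω | f ω ≤ 0} = 0 := by
      rw [h 0 le_rfl]; simp
    have : P {ω | f ω ≤ t} ≤ P {ω | f ω ≤ 0} :=
      measure_mono (fun ω hω => le_trans hω (le_of_not_ge ht))
    simpa [h0] using this

lemma my_lintegral_exp_expMeasure {r u : ℝ} (hr : 0 < r) (hu : 0 ≤ u) (hur : u < r) :
    ∫⁻ x, ENNReal.ofReal (Real.exp (u * x)) ∂(expMeasure r)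
      = ENNReal.ofReal (r / (r - u)) := by
  have hb : 0 < r - u := by linarith
  have hmeas : Measurable fun x : ℝ => ENNReal.ofReal (Real.exp (u * x)) :=
    (measurable_id.const_mul u).exp.ennreal_ofReal
  rw [expMeasure, gammaMeasure,
    lintegral_withDensity_eq_lintegral_mul _ (show Measurable (gammaPDF 1 r) from (measurable_gammaPDFReal 1 r).ennreal_ofReal) hmeas]
  have hpt : ∀ x : ℝ, (fun x => gammaPDF 1 r x * ENNReal.ofReal (Real.exp (u * x))) x
      = (Ici (0:ℝ)).indicator (fun x => ENNReal.ofReal (r * Real.exp (-((r-u) * x)))) x := by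
    intro x
    show exponentialPDF r x * _ = _
    rw [exponentialPDF_eq]
    by_cases hx : 0 ≤ x
    · rw [if_pos hx, indicator_of_mem (Set.mem_Ici.mpr hx), ← ENNReal.ofReal_mul (by positivity)]
      congr 1
      rw [mul_assoc, ← Real.exp_add]
      ring_nf
    · rw [if_neg hx, indicator_of_notMem (by simpa using hx)]
      simp
  calc ∫⁻ x, gammaPDF 1 r x * ENNReal.ofReal (Real.exp (u * x))
      = ∫⁻ x, (Ici (0:ℝ)).indicator (fun x => ENNReal.ofReal (r * Real.exp (-((r-u) * x)))) x := by
        exact lintegral_congr hpt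
    _ = ∫⁻ x in Ici (0:ℝ), ENNReal.ofReal (r * Real.exp (-((r-u) * x))) := by
        exact lintegral_indicator measurableSet_Ici _
    _ = ENNReal.ofReal (∫ x in Ici (0:ℝ), r * Real.exp (-((r-u) * x))) := by
        rw [MeasureTheory.ofReal_integral_eq_lintegral_ofReal]
        · refine Integrable.const_mul ?_ r
          exact (integrableOn_Ici_iff_integrableOn_Ioi).mpr
            ((exp_neg_integrableOn_Ioi 0 hb).congr_fun (fun x _ => by ring_nf) measurableSet_Ioi)
        · exact ae_of_all _ fun x => by positivity
    _ = ENNReal.ofReal (r / (r - u)) := by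
        congr 1
        rw [MeasureTheory.integral_Ici_eq_integral_Ioi, MeasureTheory.integral_const_mul]
        have : (∫ x in Ioi (0:ℝ), Real.exp (-((r-u) * x)))
            = (r-u)⁻¹ • ∫ x in Ioi ((r-u) * 0), Real.exp (-x) := by
          simpa using MeasureTheory.integral_comp_mul_left_Ioi (fun x => Real.exp (-x)) 0 hb
        rw [this]
        simp only [mul_zero, integral_exp_neg_Ioi, neg_zero, Real.exp_zero, smul_eq_mul, mul_one]
        field_simp

lemma my_lintegral_exp_P {Ω : Type*} [MeasurableSpace Ω] (P : Measure Ω)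
    [IsProbabilityMeasure P] {r u : ℝ} (hr : 0 < r) (hu : 0 ≤ u) (hur : u < r)
    {f : Ω → ℝ} (hf : Measurable f) (hmap : P.map f = expMeasure r) :
    ∫⁻ ω, ENNReal.ofReal (Real.exp (u * f ω)) ∂P = ENNReal.ofReal (r / (r - u)) := by
  have hg : Measurable fun x : ℝ => ENNReal.ofReal (Real.exp (u * x)) :=
    (measurable_id.const_mul u).exp.ennreal_ofReal
  rw [← MeasureTheory.lintegral_map hg hf, hmap, my_lintegral_exp_expMeasure hr hu hur]

lemma my_integrable_exp_P {Ω : Type*} [MeasurableSpace Ω] (P : Measure Ω)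
    [IsProbabilityMeasure P] {r u : ℝ} (hr : 0 < r) (hu : 0 ≤ u) (hur : u < r)
    {f : Ω → ℝ} (hf : Measurable f) (hmap : P.map f = expMeasure r) :
    Integrable (fun ω => Real.exp (u * f ω)) P := by
  refine ⟨((hf.const_mul u).exp).aestronglyMeasurable, ?_⟩
  rw [HasFiniteIntegral]
  have : ∀ ω, ‖Real.exp (u * f ω)‖ₑ = ENNReal.ofReal (Real.exp (u * f ω)) :=
    fun ω => Real.enorm_eq_ofReal (Real.exp_nonneg _)
  rw [lintegral_congr this, my_lintegral_exp_P P hr hu hur hf hmap]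
  exact ENNReal.ofReal_lt_top

lemma my_mgf_exp_P {Ω : Type*} [MeasurableSpace Ω] (P : Measure Ω)
    [IsProbabilityMeasure P] {r u : ℝ} (hr : 0 < r) (hu : 0 ≤ u) (hur : u < r)
    {f : Ω → ℝ} (hf : Measurable f) (hmap : P.map f = expMeasure r) :
    mgf f P u = r / (r - u) := by
  have hnn : 0 ≤ r / (r - u) := by
    have : 0 < r - u := by linarith
    positivity
  rw [mgf, integral_eq_lintegral_of_nonneg_ae (ae_of_all _ fun ω => Real.exp_nonneg _)
    ((hf.const_mul u).exp).aestronglyMeasurable, my_lintegral_exp_P P hr hu hur hf hmap,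
    ENNReal.toReal_ofReal hnn]

lemma my_expMeasure_Iic {r : ℝ} (hr : 0 < r) (t : ℝ) :
    expMeasure r (Set.Iic t)
      = ENNReal.ofReal (if 0 ≤ t then 1 - Real.exp (-(r*t)) else 0) := by
  rw [expMeasure, gammaMeasure, withDensity_apply _ measurableSet_Iic]
  exact lintegral_exponentialPDF_eq_antiDeriv hr t

lemma my_expMeasure_Ici_le {r c : ℝ} (hr : 0 < r) (hc : 0 ≤ c) :
    expMeasure r (Set.Ici c) ≤ ENNReal.ofReal (Real.exp (-(r * c))) := by
  have hp := isProbabilityMeasure_expMeasure hr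
  have hsing : expMeasure r {c} = 0 := by
    have habs : expMeasure r ≪ (volume : Measure ℝ) := withDensity_absolutelyContinuous _ _
    exact habs (measure_singleton c)
  have hIci : Set.Ici c = {c} ∪ Set.Ioi c := by rw [Set.union_comm, Set.Ioi_union_left]
  have h1 : expMeasure r (Set.Ici c) ≤ expMeasure r (Set.Ioi c) := by
    calc expMeasure r (Set.Ici c) = expMeasure r ({c} ∪ Set.Ioi c) := by rw [← hIci]
      _ ≤ expMeasure r {c} + expMeasure r (Set.Ioi c) := measure_union_le _ _
      _ = expMeasure r (Set.Ioi c) := by rw [hsing, zero_add]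
  refine h1.trans ?_
  have h2 : expMeasure r (Set.Ioi c) = 1 - expMeasure r (Set.Iic c) := by
    rw [← Set.compl_Iic, measure_compl measurableSet_Iic (measure_ne_top _ _), measure_univ]
  rw [h2, my_expMeasure_Iic hr c, if_pos hc]
  rw [tsub_le_iff_right]
  have he1 : Real.exp (-(r*c)) ≤ 1 := Real.exp_le_one_iff.mpr (by positivity |> neg_nonpos_of_nonneg)
  rw [← ENNReal.ofReal_add (Real.exp_nonneg _) (by linarith)]
  simp

lemma my_factor_le {m r lam : ℝ} (hm : 0 < m) (hmr : m ≤ r) (hlam : 1 < lam) :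
    r / (r - m * (1 - 1/lam)) ≤ Real.exp (m / r * Real.log lam) := by
  have hr : 0 < r := lt_of_lt_of_le hm hmr
  have hlam0 : 0 < lam := by linarith
  set θ : ℝ := m / r with hθ
  have hθ0 : 0 < θ := div_pos hm hr
  have hθ1 : θ ≤ 1 := (div_le_one hr).mpr hmr
  have key : Real.exp (-(θ * Real.log lam)) ≤ 1 - θ * (1 - 1/lam) := by
    have hgm := Real.geom_mean_le_arith_mean2_weighted (by linarith : (0:ℝ) ≤ 1 - θ) hθ0.le
      zero_le_one (by positivity : (0:ℝ) ≤ 1/lam) (by ring)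
    have hpow : (1:ℝ) ^ (1 - θ) * (1/lam) ^ θ = Real.exp (-(θ * Real.log lam)) := by
      rw [Real.one_rpow, one_mul, Real.rpow_def_of_pos (by positivity), one_div,
        Real.log_inv]
      ring_nf
    rw [hpow] at hgm
    calc Real.exp (-(θ * Real.log lam)) ≤ (1 - θ) * 1 + θ * (1/lam) := hgm
      _ = 1 - θ * (1 - 1/lam) := by ring
  have hpos : 0 < 1 - θ * (1 - 1/lam) := lt_of_lt_of_le (Real.exp_pos _) key
  have hden : r - m * (1 - 1/lam) = r * (1 - θ * (1 - 1/lam)) := by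
    rw [hθ]; field_simp
  have h1 : r / (r - m * (1 - 1/lam)) = 1 / (1 - θ * (1 - 1/lam)) := by
    rw [hden]; rw [eq_div_iff hpos.ne']; rw [div_mul_eq_mul_div, mul_comm]; rw [div_eq_one_iff_eq (by positivity)]
  rw [h1]
  have h2 := one_div_le_one_div_of_le (Real.exp_pos _) key
  rwa [one_div (Real.exp _), ← Real.exp_neg, neg_neg] at h2

/-- **Upper tail bound for sums of independent exponentials** (Janson, Thm 5.1(i)).
`X = X_0 + ⋯ + X_{K-1}` with independent `X k ~ Exp(a k)`, `a_* = min_k a k`,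
`E[X] = ∑ 1/(a k)`.  For every `δ > 0`,
`P(X ≥ (1+δ)E[X]) ≤ (1/(1+δ)) exp(−a_* E[X] (δ − log(1+δ)))`. -/
theorem sum_exponential_upper_tail
    {Ω : Type*} [MeasurableSpace Ω] (P : Measure Ω) [IsProbabilityMeasure P]
    (K : ℕ) (hK : 0 < K) (a : ℕ → ℝ) (ha : ∀ k < K, 0 < a k)
    (X : ℕ → Ω → ℝ) (hmeas : ∀ k, Measurable (X k))
    (hindep : iIndepFun X P)
    (hexp : ∀ k < K, ∀ t : ℝ, 0 ≤ t →
      P {ω | X k ω ≤ t} = ENNReal.ofReal (1 - Real.exp (-(a k) * t)))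
    (δ : ℝ) (hδ : 0 < δ) :
    P {ω | (1 + δ) * (∑ k ∈ range K, 1 / a k) ≤ ∑ k ∈ range K, X k ω}
      ≤ ENNReal.ofReal ((1 / (1 + δ)) *
          Real.exp (-((range K).inf' (nonempty_range_iff.mpr hK.ne') a)
            * (∑ k ∈ range K, 1 / a k) * (δ - Real.log (1 + δ)))) := by
  classical
  set m : ℝ := (range K).inf' (nonempty_range_iff.mpr hK.ne') a with hm_def
  obtain ⟨k₀, hk₀mem, hk₀⟩ := Finset.exists_mem_eq_inf' (nonempty_range_iff.mpr hK.ne') a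
  have hk₀K : k₀ < K := mem_range.mp hk₀mem
  have hma : m = a k₀ := hk₀
  have hm_pos : 0 < m := hma ▸ ha k₀ hk₀K
  have hm_le : ∀ k ∈ range K, m ≤ a k := fun k hk => Finset.inf'_le a hk
  set lam : ℝ := 1 + δ with hlam_def
  have hlam : 1 < lam := by simp only [hlam_def]; linarith
  have hlam0 : 0 < lam := by linarith
  set μ : ℝ := ∑ k ∈ range K, 1 / a k with hμ_def
  have hμ_pos : 0 < μ :=
    Finset.sum_pos (fun k hk => by
      have := ha k (mem_range.mp hk); positivity) ⟨k₀, hk₀mem⟩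
  set u : ℝ := m * (1 - 1/lam) with hu_def
  have h1lam : 0 < 1 - 1/lam := by
    have : 1/lam < 1 := by rw [div_lt_one hlam0]; linarith
    linarith
  have hu0 : 0 ≤ u := by positivity
  have hum : u < m := by
    have h01 : 0 < 1/lam := by positivity
    have h2 : 1 - 1/lam < 1 := by linarith
    calc u = m * (1 - 1/lam) := rfl
      _ < m * 1 := mul_lt_mul_of_pos_left h2 hm_pos
      _ = m := mul_one m
  set x : ℝ := lam * μ with hx_def
  set s : Finset ℕ := (range K).erase k₀ with hs_def
  set Y : Ω → ℝ := ∑ k ∈ s, X k with hY_def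
  have hYfun : Y = fun ω => ∑ k ∈ s, X k ω := by
    funext ω; rw [hY_def, Finset.sum_apply]
  have hYmeas : Measurable Y := by
    rw [hYfun]; exact Finset.measurable_sum s (fun k _ => hmeas k)
  have hmap : ∀ k ∈ range K, P.map (X k) = expMeasure (a k) := by
    intro k hk
    exact my_map_eq_expMeasure P (ha k (mem_range.mp hk)) (hmeas k)
      (fun t ht => hexp k (mem_range.mp hk) t ht)
  have hurk : ∀ k ∈ range K, u < a k := fun k hk => lt_of_lt_of_le hum (hm_le k hk)
  -- independence of Y and X k₀
  have hind : IndepFun Y (X k₀) P := by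
    rw [hY_def]
    exact hindep.indepFun_finsetSum_of_notMem hmeas (Finset.notMem_erase k₀ _)
  have hPY : IsProbabilityMeasure (P.map Y) := Measure.isProbabilityMeasure_map hYmeas.aemeasurable
  have hP0 : IsProbabilityMeasure (P.map (X k₀)) :=
    Measure.isProbabilityMeasure_map (hmeas k₀).aemeasurable
  have hpair : P.map (fun ω => (Y ω, X k₀ ω)) = (P.map Y).prod (P.map (X k₀)) :=
    (indepFun_iff_map_prod_eq_prod_map_map hYmeas.aemeasurable
      (hmeas k₀).aemeasurable).mp hind
  have hsetm : MeasurableSet {p : ℝ × ℝ | x ≤ p.1 + p.2} :=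
    measurableSet_le measurable_const (measurable_fst.add measurable_snd)
  -- rewrite the event
  have hevent : {ω | x ≤ ∑ k ∈ range K, X k ω}
      = (fun ω => (Y ω, X k₀ ω)) ⁻¹' {p : ℝ × ℝ | x ≤ p.1 + p.2} := by
    ext ω
    simp only [Set.mem_setOf_eq, Set.mem_preimage]
    rw [hY_def, Finset.sum_apply]
    rw [← Finset.sum_erase_add (range K) _ hk₀mem]
  -- Fubini
  have hmain : P {ω | x ≤ ∑ k ∈ range K, X k ω}
      = ∫⁻ y, (P.map (X k₀)) (Set.Ici (x - y)) ∂(P.map Y) := by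
    rw [hevent, ← Measure.map_apply (hYmeas.prodMk (hmeas k₀)) hsetm, hpair,
      Measure.prod_apply hsetm]
    congr 1
    ext y
    congr 1
    ext z
    simp only [Set.mem_preimage, Set.mem_setOf_eq, Set.mem_Ici]
    constructor
    · intro h; linarith
    · intro h; linarith
  -- pointwise tail bound
  have htail : ∀ y : ℝ, (P.map (X k₀)) (Set.Ici (x - y))
      ≤ ENNReal.ofReal (Real.exp (-u * x) * Real.exp (u * y)) := by
    intro y
    rw [hmap k₀ hk₀mem, ← hma]
    by_cases hyx : y ≤ x
    · refine (my_expMeasure_Ici_le hm_pos (by linarith : (0:ℝ) ≤ x - y)).trans ?_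
      rw [← Real.exp_add]
      apply ENNReal.ofReal_le_ofReal
      apply Real.exp_le_exp.mpr
      have hprod : 0 ≤ (m - u) * (x - y) := mul_nonneg (by linarith) (by linarith)
      nlinarith
    · have hprob := isProbabilityMeasure_expMeasure hm_pos
      refine le_trans (measure_mono (Set.subset_univ _)) ?_
      rw [measure_univ, ← Real.exp_add]
      rw [show (1 : ENNReal) = ENNReal.ofReal 1 by simp]
      apply ENNReal.ofReal_le_ofReal
      have : 0 ≤ -u * x + u * y := by nlinarith
      calc (1:ℝ) = Real.exp 0 := by simp
        _ ≤ Real.exp (-u * x + u * y) := Real.exp_le_exp.mpr this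
  -- integrate the bound
  have hint : ∀ k ∈ s, Integrable (fun ω => Real.exp (u * X k ω)) P := by
    intro k hk
    have hkR : k ∈ range K := Finset.mem_of_mem_erase hk
    exact my_integrable_exp_P P (ha k (mem_range.mp hkR)) hu0 (hurk k hkR) (hmeas k)
      (hmap k hkR)
  have hYint : Integrable (fun ω => Real.exp (u * Y ω)) P := by
    rw [hY_def]
    exact hindep.integrable_exp_mul_sum hmeas hint
  have hgmeas : Measurable fun y : ℝ => ENNReal.ofReal (Real.exp (u * y)) :=
    (Real.measurable_exp.comp (measurable_const.mul measurable_id)).ennreal_ofReal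
  have hlint : ∫⁻ y, ENNReal.ofReal (Real.exp (u * y)) ∂(P.map Y)
      = ENNReal.ofReal (mgf Y P u) := by
    rw [MeasureTheory.lintegral_map hgmeas hYmeas,
      ← MeasureTheory.ofReal_integral_eq_lintegral_ofReal hYint
        (ae_of_all _ fun ω => Real.exp_nonneg _)]
    rfl
  -- mgf bound
  have hmgf : mgf Y P u ≤ Real.exp ((m * μ - 1) * Real.log lam) := by
    have hfac : mgf Y P u = ∏ k ∈ s, (a k / (a k - u)) := by
      rw [hY_def, hindep.mgf_sum hmeas s]
      refine Finset.prod_congr rfl fun k hk => ?_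
      have hkR : k ∈ range K := Finset.mem_of_mem_erase hk
      exact my_mgf_exp_P P (ha k (mem_range.mp hkR)) hu0 (hurk k hkR) (hmeas k) (hmap k hkR)
    rw [hfac]
    have hstep : ∏ k ∈ s, (a k / (a k - u)) ≤ ∏ k ∈ s, Real.exp (m / a k * Real.log lam) := by
      refine Finset.prod_le_prod (fun k hk => ?_) (fun k hk => ?_)
      · have hkR : k ∈ range K := Finset.mem_of_mem_erase hk
        have h1 : 0 < a k := ha k (mem_range.mp hkR)
        have h2 : u < a k := hurk k hkR
        exact div_nonneg h1.le (by linarith)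
      · have hkR : k ∈ range K := Finset.mem_of_mem_erase hk
        exact my_factor_le hm_pos (hm_le k hkR) hlam
    refine hstep.trans ?_
    rw [← Real.exp_sum]
    apply Real.exp_le_exp.mpr
    have hs1 : ∑ k ∈ s, (1:ℝ) / a k = μ - 1 / a k₀ := by
      have h := Finset.sum_erase_add (range K) (fun k => 1 / a k) hk₀mem
      rw [hμ_def]
      simp only [hs_def]
      linarith [h]
    have hsum_inner : ∑ k ∈ s, m / a k = m * (μ - 1 / a k₀) := by
      rw [← hs1, Finset.mul_sum]
      exact Finset.sum_congr rfl fun k _ => (mul_one_div m (a k)).symm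
    have hsum : ∑ k ∈ s, m / a k * Real.log lam = (m * (μ - 1 / a k₀)) * Real.log lam := by
      rw [← Finset.sum_mul, hsum_inner]
    rw [hsum, ← hma]
    have hmm : m * (μ - 1/m) = m * μ - 1 := by
      field_simp
    rw [hmm]
  -- put everything together
  calc P {ω | x ≤ ∑ k ∈ range K, X k ω}
      = ∫⁻ y, (P.map (X k₀)) (Set.Ici (x - y)) ∂(P.map Y) := hmain
    _ ≤ ∫⁻ y, ENNReal.ofReal (Real.exp (-u * x) * Real.exp (u * y)) ∂(P.map Y) :=
        lintegral_mono htail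
    _ = ENNReal.ofReal (Real.exp (-u * x)) * ENNReal.ofReal (mgf Y P u) := by
        simp_rw [ENNReal.ofReal_mul (Real.exp_nonneg _)]
        rw [lintegral_const_mul _ hgmeas, hlint]
    _ ≤ ENNReal.ofReal (Real.exp (-u * x)) * ENNReal.ofReal (Real.exp ((m * μ - 1) * Real.log lam)) := by
        gcongr
    _ = ENNReal.ofReal ((1 / lam) * Real.exp (-m * μ * (δ - Real.log lam))) := by
        have hux : u * x = m * μ * δ := by
          rw [hu_def, hx_def]
          field_simp
          ring
        have h1lam' : (1:ℝ)/lam = Real.exp (-Real.log lam) := by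
          rw [Real.exp_neg, Real.exp_log hlam0, one_div]
        have heq : Real.exp (-u * x) * Real.exp ((m * μ - 1) * Real.log lam)
            = (1 / lam) * Real.exp (-m * μ * (δ - Real.log lam)) := by
          rw [h1lam', ← Real.exp_add, ← Real.exp_add]
          congr 1
          linear_combination -hux
        rw [← ENNReal.ofReal_mul (Real.exp_nonneg _), heq]
end

section
/- Let X = X_1 + ... + X_K where the X_k are independent exponential random variables with rates a_k > 0, and let a_* = min_k a_k. Then for every 0 < δ < 1, P(X ≤ (1−δ)·E[X]) ≤ exp(−a_*·E[X]·(−δ − log(1−δ))). -/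
open ProbabilityTheory MeasureTheory Finset

section Aux

open Real Set

/-- Concavity of `log`: chord bound. -/
lemma aux_log_interp {u v : ℝ} (hu : 0 < u) (huv : u ≤ v) :
    (u / v) * Real.log (1 + v) ≤ Real.log (1 + u) := by
  have hv : 0 < v := lt_of_lt_of_le hu huv
  have h := strictConcaveOn_log_Ioi.concaveOn.2
    (show (1 : ℝ) ∈ Ioi (0:ℝ) from mem_Ioi.mpr one_pos)
    (show (1 + v : ℝ) ∈ Ioi (0:ℝ) from mem_Ioi.mpr (by linarith))
    (show (0:ℝ) ≤ 1 - u / v by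
      rw [sub_nonneg]; exact (div_le_one hv).mpr huv)
    (show (0:ℝ) ≤ u / v by positivity)
    (show (1 - u / v) + u / v = 1 by ring)
  have hxy : (1 - u / v) • (1 : ℝ) + (u / v) • (1 + v) = 1 + u := by
    field_simp
    rw [smul_eq_mul, smul_eq_mul, div_mul_eq_mul_div, div_mul_eq_mul_div, ← add_div, div_eq_iff hv.ne']; ring
  rw [hxy, Real.log_one, smul_eq_mul, smul_eq_mul, mul_zero, zero_add] at h
  exact h

variable {Ω : Type*} [MeasurableSpace Ω] (P : Measure Ω) [IsProbabilityMeasure P]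

lemma aux_map_eq_expMeasure {Y : Ω → ℝ} (hY : Measurable Y) {r : ℝ} (hr : 0 < r)
    (h : ∀ t : ℝ, 0 ≤ t → P {ω | Y ω ≤ t} = ENNReal.ofReal (1 - Real.exp (-r * t))) :
    P.map Y = expMeasure r := by
  haveI : IsProbabilityMeasure (P.map Y) := Measure.isProbabilityMeasure_map hY.aemeasurable
  refine Measure.ext_of_Iic _ _ (fun t => ?_)
  rw [Measure.map_apply hY measurableSet_Iic]
  have hexp_side : expMeasure r (Iic t)
      = ENNReal.ofReal (if 0 ≤ t then 1 - Real.exp (-(r * t)) else 0) := by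
    rw [expMeasure, gammaMeasure, withDensity_apply _ measurableSet_Iic]
    exact lintegral_exponentialPDF_eq_antiDeriv hr t
  rw [hexp_side]
  by_cases ht : 0 ≤ t
  · rw [if_pos ht, ← neg_mul]
    exact h t ht
  · rw [if_neg ht, ENNReal.ofReal_zero]
    have h0 : P {ω | Y ω ≤ 0} = 0 := by
      rw [h 0 le_rfl]; simp
    refine measure_mono_null ?_ h0
    intro ω hω
    exact le_trans (show Y ω ≤ t from hω) (le_of_not_ge ht)

lemma aux_mgf_exp {Y : Ω → ℝ} (hY : Measurable Y) {r t : ℝ} (hr : 0 < r) (ht : t < r)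
    (h : P.map Y = expMeasure r) : mgf Y P t = r / (r - t) := by
  have hrt : 0 < r - t := by linarith
  have hmeas : Measurable fun x : ℝ => ENNReal.ofReal (Real.exp (t * x)) :=
    (Real.measurable_exp.comp (measurable_id.const_mul t)).ennreal_ofReal
  rw [mgf, integral_eq_lintegral_of_nonneg_ae (ae_of_all _ fun ω => (Real.exp_pos _).le)
      ((hY.const_mul t).exp.aestronglyMeasurable)]
  have hmap : ∫⁻ ω, ENNReal.ofReal (Real.exp (t * Y ω)) ∂P
      = ∫⁻ x, ENNReal.ofReal (Real.exp (t * x)) ∂(P.map Y) := by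
    rw [lintegral_map hmeas hY]
  rw [hmap, h, expMeasure, gammaMeasure,
    lintegral_withDensity_eq_lintegral_mul _
      (show Measurable (gammaPDF 1 r) from (measurable_gammaPDFReal 1 r).ennreal_ofReal) hmeas]
  have hpt : (fun x => gammaPDF 1 r x * ENNReal.ofReal (Real.exp (t * x)))
      = fun x => ENNReal.ofReal (r / (r - t)) * exponentialPDF (r - t) x := by
    funext x
    by_cases hx : 0 ≤ x
    · have h1 : gammaPDF 1 r x = exponentialPDF r x := rfl
      rw [h1, exponentialPDF_of_nonneg hx, exponentialPDF_of_nonneg hx,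
        ← ENNReal.ofReal_mul (by positivity), ← ENNReal.ofReal_mul (by positivity)]
      congr 1
      have hexps : Real.exp (-(r * x)) * Real.exp (t * x) = Real.exp (-((r - t) * x)) := by
        rw [← Real.exp_add]; ring_nf
      rw [mul_assoc, hexps]
      field_simp
    · have hx' : x < 0 := lt_of_not_ge hx
      have h1 : gammaPDF 1 r x = exponentialPDF r x := rfl
      rw [h1, exponentialPDF_of_neg hx', exponentialPDF_of_neg hx', zero_mul, mul_zero]
  simp only [Pi.mul_apply]
  rw [hpt, lintegral_const_mul _ (show Measurable (exponentialPDF (r - t)) from (measurable_gammaPDFReal 1 (r - t)).ennreal_ofReal),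
    lintegral_exponentialPDF_eq_one hrt, mul_one, ENNReal.toReal_ofReal (by positivity)]

end Aux

/-- **Lower tail bound for sums of independent exponentials** (Janson, Thm 5.1(iii)).
`X = X_0 + ⋯ + X_{K-1}` with independent `X k ~ Exp(a k)`, `a_* = min_k a k`,
`E[X] = ∑ 1/(a k)`.  For every `0 < δ < 1`,
`P(X ≤ (1−δ)E[X]) ≤ exp(−a_* E[X] (−δ − log(1−δ)))`. -/
theorem sum_exponential_lower_tail
    {Ω : Type*} [MeasurableSpace Ω] (P : Measure Ω) [IsProbabilityMeasure P]
    (K : ℕ) (hK : 0 < K) (a : ℕ → ℝ) (ha : ∀ k < K, 0 < a k)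
    (X : ℕ → Ω → ℝ) (hmeas : ∀ k, Measurable (X k))
    (hindep : iIndepFun X P)
    (hexp : ∀ k < K, ∀ t : ℝ, 0 ≤ t →
      P {ω | X k ω ≤ t} = ENNReal.ofReal (1 - Real.exp (-(a k) * t)))
    (δ : ℝ) (hδ0 : 0 < δ) (hδ1 : δ < 1) :
    P {ω | ∑ k ∈ range K, X k ω ≤ (1 - δ) * (∑ k ∈ range K, 1 / a k)}
      ≤ ENNReal.ofReal
          (Real.exp (-((range K).inf' (nonempty_range_iff.mpr hK.ne') a)
            * (∑ k ∈ range K, 1 / a k) * (-δ - Real.log (1 - δ)))) := by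
  have h1δ : 0 < 1 - δ := by linarith
  set m : ℝ := ∑ k ∈ range K, 1 / a k with hm
  set astar : ℝ := (range K).inf' (nonempty_range_iff.mpr hK.ne') a with hastar
  have hastar_pos : 0 < astar := by
    obtain ⟨k, hk, he⟩ := Finset.exists_mem_eq_inf' (nonempty_range_iff.mpr hK.ne') a
    rw [hastar, he]; exact ha k (mem_range.mp hk)
  have hastar_le : ∀ k ∈ range K, astar ≤ a k := fun k hk => Finset.inf'_le a hk
  set s : ℝ := astar * δ / (1 - δ) with hs_def
  have hs : 0 < s := by positivity
  -- a.e. nonnegativity of each X k and of the sum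
  have hnn : ∀ k ∈ range K, 0 ≤ᵐ[P] X k := by
    intro k hk
    have h0 : P {ω | X k ω ≤ 0} = 0 := by
      rw [hexp k (mem_range.mp hk) 0 le_rfl]; simp
    rw [Filter.EventuallyLE, ae_iff]
    refine measure_mono_null (fun ω hω => ?_) h0
    simp only [Set.mem_setOf_eq, Pi.zero_apply, not_le] at hω ⊢
    exact hω.le
  have hsum_nn : ∀ᵐ ω ∂P, 0 ≤ (∑ k ∈ range K, X k) ω := by
    have hall : ∀ᵐ ω ∂P, ∀ k ∈ range K, 0 ≤ X k ω := by
      rw [Filter.eventually_all_finset]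
      exact hnn
    filter_upwards [hall] with ω hω
    rw [Finset.sum_apply]
    exact Finset.sum_nonneg hω
  -- integrability of exp(-s * sum)
  have hmeas_sum : Measurable (∑ k ∈ range K, X k) := by
    have hfe : (∑ k ∈ range K, X k) = fun ω => ∑ k ∈ range K, X k ω := by
      funext ω; exact Finset.sum_apply ω (range K) X
    rw [hfe]
    exact Finset.measurable_sum _ fun k _ => hmeas k
  have hint : Integrable (fun ω => Real.exp (-s * (∑ k ∈ range K, X k) ω)) P := by
    refine (integrable_const (1 : ℝ)).mono'
      ((hmeas_sum.const_mul (-s)).exp.aestronglyMeasurable) ?_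
    filter_upwards [hsum_nn] with ω hω
    rw [Real.norm_eq_abs, abs_of_pos (Real.exp_pos _)]
    calc Real.exp (-s * (∑ k ∈ range K, X k) ω) ≤ Real.exp 0 :=
          Real.exp_le_exp.mpr (by nlinarith)
      _ = 1 := Real.exp_zero
  -- Chernoff bound
  have hch := measure_le_le_exp_mul_mgf (μ := P) (X := ∑ k ∈ range K, X k)
    ((1 - δ) * m) (t := -s) (by linarith) hint
  -- mgf computation
  have hmgf : mgf (∑ k ∈ range K, X k) P (-s) = ∏ k ∈ range K, a k / (a k + s) := by
    rw [hindep.mgf_sum hmeas (range K)]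
    refine Finset.prod_congr rfl fun k hk => ?_
    have hak : 0 < a k := ha k (mem_range.mp hk)
    have hmap := aux_map_eq_expMeasure P (hmeas k) hak (hexp k (mem_range.mp hk))
    rw [aux_mgf_exp P (hmeas k) hak (by linarith) hmap]
    ring_nf
  -- per-factor bound
  have hfac : ∀ k ∈ range K, a k / (a k + s)
      ≤ Real.exp (astar / a k * Real.log (1 - δ)) := by
    intro k hk
    have hak : 0 < a k := ha k (mem_range.mp hk)
    set u : ℝ := s / a k with hu_def
    set v : ℝ := δ / (1 - δ) with hv_def
    have hu : 0 < u := by positivity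
    have huv_eq : u = astar / a k * v := by
      rw [hu_def, hv_def, hs_def]; field_simp
    have hratio : astar / a k ≤ 1 := div_le_one_of_le₀ (hastar_le k hk) hak.le
    have hv : 0 < v := by positivity
    have huv : u ≤ v := by
      rw [huv_eq]
      nlinarith
    have huvv : u / v = astar / a k := by
      rw [huv_eq]; field_simp
    have hlog := aux_log_interp hu huv
    have h1v : 1 + v = (1 - δ)⁻¹ := by
      rw [hv_def]; field_simp; ring
    have hlogv : Real.log (1 + v) = -Real.log (1 - δ) := by
      rw [h1v, Real.log_inv]
    rw [huvv, hlogv] at hlog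
    have h1u : 0 < 1 + u := by linarith
    have hkey : a k / (a k + s) = Real.exp (-Real.log (1 + u)) := by
      rw [Real.exp_neg, Real.exp_log h1u]
      rw [hu_def]
      field_simp
    rw [hkey]
    rw [Real.exp_le_exp]
    nlinarith
  -- product bound
  have hprod : ∏ k ∈ range K, a k / (a k + s)
      ≤ Real.exp (astar * Real.log (1 - δ) * m) := by
    calc ∏ k ∈ range K, a k / (a k + s)
        ≤ ∏ k ∈ range K, Real.exp (astar / a k * Real.log (1 - δ)) := by
          refine Finset.prod_le_prod (fun k hk => ?_) hfac
          have hak : 0 < a k := ha k (mem_range.mp hk)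
          positivity
      _ = Real.exp (∑ k ∈ range K, astar / a k * Real.log (1 - δ)) :=
          (Real.exp_sum _ _).symm
      _ = Real.exp (astar * Real.log (1 - δ) * m) := by
          congr 1
          rw [hm, Finset.mul_sum]
          refine Finset.sum_congr rfl fun k hk => ?_
          field_simp
  -- final combination
  have hfinal : Real.exp (-(-s) * ((1 - δ) * m)) * mgf (∑ k ∈ range K, X k) P (-s)
      ≤ Real.exp (-astar * m * (-δ - Real.log (1 - δ))) := by
    rw [hmgf]
    have hs1δ : s * (1 - δ) = astar * δ := by
      rw [hs_def]; field_simp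
    calc Real.exp (-(-s) * ((1 - δ) * m)) * ∏ k ∈ range K, a k / (a k + s)
        ≤ Real.exp (-(-s) * ((1 - δ) * m)) * Real.exp (astar * Real.log (1 - δ) * m) := by
          exact mul_le_mul_of_nonneg_left hprod (Real.exp_pos _).le
      _ = Real.exp (-(-s) * ((1 - δ) * m) + astar * Real.log (1 - δ) * m) :=
          (Real.exp_add _ _).symm
      _ = Real.exp (-astar * m * (-δ - Real.log (1 - δ))) := by
          congr 1
          have : -(-s) * ((1 - δ) * m) = s * (1 - δ) * m := by ring
          rw [this, hs1δ]
          ring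
  have hset : {ω | ∑ k ∈ range K, X k ω ≤ (1 - δ) * m}
      = {ω | (∑ k ∈ range K, X k) ω ≤ (1 - δ) * m} := by
    ext ω; simp [Finset.sum_apply]
  rw [hset]
  calc P {ω | (∑ k ∈ range K, X k) ω ≤ (1 - δ) * m}
      = ENNReal.ofReal ((P {ω | (∑ k ∈ range K, X k) ω ≤ (1 - δ) * m}).toReal) :=
        (ENNReal.ofReal_toReal (measure_ne_top P _)).symm
    _ ≤ ENNReal.ofReal (Real.exp (-astar * m * (-δ - Real.log (1 - δ)))) :=
        ENNReal.ofReal_le_ofReal (le_trans hch hfinal)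
end
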